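/- For digraphs F_1 and F_2, mader_χ⃗(F_1 + F_2) ≤ mader_χ⃗(F_1) + mader_χ⃗(F_2), where F_1 + F_2 denotes the disjoint union. -/

import Mathlib

/-- A directed cycle of `A` within the set `s`, given by its first vertex `v`
and the list `l` of remaining vertices. Its length (number of vertices/arcs)
is `(v :: l).length`. -/
def IsCycleOn {V : Type} (A : V → V → Prop) (s : Set V) (v : V) (l : List V) : Prop :=
  (∀ x ∈ v :: l, x ∈ s) ∧ (v :: l).Nodup ∧ List.Chain A v (l ++ [v])

/-- `D[s]` admits a `k`-dicolouring: a colouring with no monochromatic directed cycle. -/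
def DicolorableOn {V : Type} (A : V → V → Prop) (s : Set V) (k : ℕ) : Prop :=
  ∃ φ : V → Fin k, ∀ v l, IsCycleOn A s v l → ¬ (∀ x ∈ v :: l, φ x = φ v)

/-- `D[s]` is `k`-dicritical: its dichromatic number is `k` (not `(k-1)`-dicolourable but
`k`-dicolourable) and removing any vertex or any arc makes it `(k-1)`-dicolourable. -/
def Dicritical {V : Type} (A : V → V → Prop) (s : Set V) (k : ℕ) : Prop :=
  ¬ DicolorableOn A s (k - 1) ∧ DicolorableOn A s k ∧
  (∀ v ∈ s, DicolorableOn A (s \ {v}) (k - 1)) ∧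
  (∀ a b, a ∈ s → b ∈ s → A a b →
    DicolorableOn (fun x y => A x y ∧ ¬(x = a ∧ y = b)) s (k - 1))

/-- The digraph `A` contains a subdivision of the digraph `B`: there are branch vertices
`f u` (injectively) and, for each arc `(u,v)` of `B`, a directed path from `f u` to `f v`
whose internal vertices `p u v` are pairwise distinct, avoid all branch vertices, and are
disjoint from the internal vertices of the paths of all other arcs. -/
def ContainsSubdivision {W V : Type} (B : W → W → Prop) (A : V → V → Prop) : Prop :=
  ∃ (f : W → V) (p : W → W → List V),
    Function.Injective f ∧
    (∀ u v, B u v → List.Chain A (f u) (p u v ++ [f v])) ∧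
    (∀ u v, B u v → (f u :: (p u v ++ [f v])).Nodup) ∧
    (∀ u v, B u v → ∀ x ∈ p u v, ∀ w : W, x ≠ f w) ∧
    (∀ u v u' v', B u v → B u' v' → (u, v) ≠ (u', v') → ∀ x ∈ p u v, x ∉ p u' v')

/-- The dichromatic number of the digraph `A`. -/
noncomputable def dichromaticNumber {V : Type} (A : V → V → Prop) : ℕ :=
  sInf {k | DicolorableOn A Set.univ k}

/-- `c` is a Mader bound for `B`: every (finite, loopless) digraph with dichromatic number
at least `c` contains a subdivision of `B`. -/
def IsMaderBound {W : Type} (B : W → W → Prop) (c : ℕ) : Prop :=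
  ∀ (n : ℕ) (A : Fin n → Fin n → Prop), (∀ v, ¬ A v v) →
    c ≤ dichromaticNumber A → ContainsSubdivision B A

/-- `mader_χ⃗(B)`: the least `c` such that every digraph with dichromatic number at least
`c` contains a subdivision of `B`. -/
noncomputable def maderChi {W : Type} (B : W → W → Prop) : ℕ :=
  sInf {c | IsMaderBound B c}

/-- The disjoint union of two digraphs. -/
def sumRel {W₁ W₂ : Type} (B₁ : W₁ → W₁ → Prop) (B₂ : W₂ → W₂ → Prop) :
    W₁ ⊕ W₂ → W₁ ⊕ W₂ → Prop
  | Sum.inl a, Sum.inl b => B₁ a b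
  | Sum.inr a, Sum.inr b => B₂ a b
  | _, _ => False

section aux
variable {V : Type} {A : V → V → Prop}

lemma triv_loop {v : V} {l : List V} (hall : ∀ x ∈ l, x = v)
    (hnd : (v :: l).Nodup) (hch : List.Chain A v (l ++ [v])) : A v v := by
  have hl : l = [] := by
    cases l with
    | nil => rfl
    | cons y t =>
      exfalso
      have hy : y = v := hall y (by simp)
      rw [List.nodup_cons] at hnd
      subst hy
      exact hnd.1 (by simp)
  subst hl
  exact List.isChain_pair.mp hch

lemma dicol_mono {s : Set V} {k k' : ℕ} (h : DicolorableOn A s k) (hkk : k ≤ k') :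
    DicolorableOn A s k' := by
  obtain ⟨φ, hφ⟩ := h
  refine ⟨fun x => Fin.castLE hkk (φ x), fun v l hc hmono => hφ v l hc fun x hx => ?_⟩
  exact Fin.castLE_injective hkk (hmono x hx)

lemma dicol_subset {s t : Set V} {k : ℕ} (h : DicolorableOn A s k) (hts : t ⊆ s) :
    DicolorableOn A t k := by
  obtain ⟨φ, hφ⟩ := h
  exact ⟨φ, fun v l hc => hφ v l ⟨fun x hx => hts (hc.1 x hx), hc.2.1, hc.2.2⟩⟩

lemma dicol_union {s t : Set V} {k₁ k₂ : ℕ} (h₁ : DicolorableOn A s k₁)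
    (h₂ : DicolorableOn A t k₂) : DicolorableOn A (s ∪ t) (k₁ + k₂) := by
  classical
  obtain ⟨φ₁, hφ₁⟩ := h₁
  obtain ⟨φ₂, hφ₂⟩ := h₂
  refine ⟨fun x => if x ∈ s then ⟨φ₁ x, (φ₁ x).isLt.trans_le (Nat.le_add_right _ _)⟩ else
    ⟨k₁ + φ₂ x, by have := (φ₂ x).isLt; omega⟩, fun v l hc hmono => ?_⟩
  obtain ⟨hm, hnd, hch⟩ := hc
  by_cases hv : v ∈ s
  · have hall : ∀ x ∈ v :: l, x ∈ s := by
      intro x hx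
      have := hmono x hx
      by_contra hxs
      simp only [hv, hxs, if_true, if_false, Fin.mk.injEq] at this
      have := (φ₁ v).isLt
      omega
    refine hφ₁ v l ⟨hall, hnd, hch⟩ fun x hx => ?_
    have := hmono x hx
    simp only [hall x hx, hv, if_true, Fin.mk.injEq] at this
    exact Fin.ext this
  · have hall : ∀ x ∈ v :: l, x ∉ s := by
      intro x hx
      have := hmono x hx
      by_contra hxs
      simp only [hv, hxs, if_true, if_false, Fin.mk.injEq] at this
      have := (φ₁ x).isLt
      omega
    have hallt : ∀ x ∈ v :: l, x ∈ t := by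
      intro x hx
      rcases hm x hx with h | h
      · exact absurd h (hall x hx)
      · exact h
    refine hφ₂ v l ⟨hallt, hnd, hch⟩ fun x hx => ?_
    have := hmono x hx
    simp only [hall x hx, hv, if_false, Fin.mk.injEq] at this
    exact Fin.ext (by omega)

lemma dicol_erase (hA : ∀ v, ¬ A v v) {s : Set V} {v : V} {k : ℕ}
    (h : DicolorableOn A (s \ {v}) k) : DicolorableOn A s (k + 1) := by
  classical
  obtain ⟨φ, hφ⟩ := h
  refine ⟨fun x => if x = v then Fin.last k else (φ x).castSucc, fun w l hc hmono => ?_⟩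
  obtain ⟨hm, hnd, hch⟩ := hc
  by_cases hw : w = v
  · subst hw
    have hall : ∀ x ∈ l, x = w := by
      intro x hx
      have := hmono x (by simp [hx])
      by_contra hxv
      simp only [hxv, if_false, if_pos rfl] at this
      exact absurd this (Fin.castSucc_lt_last (φ x)).ne
    exact hA w (triv_loop hall hnd hch)
  · have hall : ∀ x ∈ w :: l, x ≠ v := by
      intro x hx
      have := hmono x hx
      by_contra hxv
      simp only [hxv, if_pos rfl, hw, if_false] at this
      exact absurd this.symm (Fin.castSucc_lt_last (φ w)).ne
    refine hφ w l ⟨fun x hx => ⟨hm x hx, hall x hx⟩, hnd, hch⟩ fun x hx => ?_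
    have := hmono x hx
    simp only [hall x hx, hw, if_false] at this
    exact Fin.castSucc_injective k this

lemma dicol_subsingleton (hA : ∀ v, ¬ A v v) {s : Set V}
    (hs : ∀ x ∈ s, ∀ y ∈ s, x = y) : DicolorableOn A s 1 := by
  refine ⟨fun _ => 0, fun v l hc _ => ?_⟩
  obtain ⟨hm, hnd, hch⟩ := hc
  have hall : ∀ x ∈ l, x = v := fun x hx => hs x (hm x (by simp [hx])) v (hm v (by simp))
  exact hA v (triv_loop hall hnd hch)

lemma chain_map {V' : Type} {A' : V' → V' → Prop} (g : V → V') (s : Set V)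
    (hg : ∀ x y, x ∈ s → y ∈ s → A x y → A' (g x) (g y)) :
    ∀ (l : List V) (v : V), (∀ x ∈ v :: l, x ∈ s) → List.Chain A v l →
      List.Chain A' (g v) (l.map g) := by
  intro l
  induction l with
  | nil => intro v _ _; exact List.Chain.nil
  | cons y t ih =>
    intro v hmem hch
    replace hch : A v y ∧ List.Chain A y t := List.isChain_cons_cons.mp hch
    refine List.Chain.cons (hg v y (hmem v (by simp)) (hmem y (by simp)) hch.1) ?_
    refine ih y (fun x hx => hmem x ?_) hch.2
    rcases hx with _ | hx
    · simp
    · rename_i hx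
      simp only [List.mem_cons]
      exact Or.inr (Or.inr hx)

end aux


/-- Subdivision with all vertices inside `s`. -/
def ContainsSubdivisionOn {W V : Type} (B : W → W → Prop) (A : V → V → Prop) (s : Set V) : Prop :=
  ∃ (f : W → V) (p : W → W → List V),
    Function.Injective f ∧
    (∀ u v, B u v → List.Chain A (f u) (p u v ++ [f v])) ∧
    (∀ u v, B u v → (f u :: (p u v ++ [f v])).Nodup) ∧
    (∀ u v, B u v → ∀ x ∈ p u v, ∀ w : W, x ≠ f w) ∧
    (∀ u v u' v', B u v → B u' v' → (u, v) ≠ (u', v') → ∀ x ∈ p u v, x ∉ p u' v') ∧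
    (∀ w, f w ∈ s) ∧ (∀ u v, B u v → ∀ x ∈ p u v, x ∈ s)

lemma dicol_self {n : ℕ} {A : Fin n → Fin n → Prop} (hA : ∀ v, ¬ A v v) :
    DicolorableOn A Set.univ n := by
  refine ⟨id, fun v l hc hmono => ?_⟩
  obtain ⟨_, hnd, hch⟩ := hc
  exact hA v (triv_loop (fun x hx => hmono x (by simp [hx])) hnd hch)

lemma restrict_sub {W : Type} (B : W → W → Prop) (c : ℕ) (hB : IsMaderBound B c)
    {n : ℕ} (A : Fin n → Fin n → Prop) (hA : ∀ v, ¬ A v v) (s : Finset (Fin n))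
    (hcol : ∀ k, k < c → ¬ DicolorableOn A (↑s) k) (hne : c ≠ 0 → s.Nonempty) :
    ContainsSubdivisionOn B A (↑s) := by
  classical
  set m := s.card with hm
  set e : Fin m → Fin n := fun i => ((s.equivFin.symm i : s) : Fin n) with he
  have he_mem : ∀ i, e i ∈ s := fun i => (s.equivFin.symm i).2
  have he_inj : Function.Injective e :=
    fun i j h => s.equivFin.symm.injective (Subtype.ext h)
  set A' : Fin m → Fin m → Prop := fun i j => A (e i) (e j) with hA'
  have hA'loop : ∀ i, ¬ A' i i := fun i => hA (e i)
  -- the dichromatic number of the restriction is at least c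
  have hT : ∀ k, DicolorableOn A' Set.univ k → c ≤ k := by
    intro k hk
    by_contra hlt
    push_neg at hlt
    refine hcol k hlt ?_
    obtain ⟨φ', hφ'⟩ := hk
    match k, hlt with
    | 0, hlt =>
      obtain ⟨v, hv⟩ := hne (by omega)
      exact (φ' (s.equivFin ⟨v, hv⟩)).elim0
    | (k'+1), hlt =>
      refine ⟨fun x => if h : x ∈ s then φ' (s.equivFin ⟨x, h⟩) else 0,
        fun v l hc hmono => ?_⟩
      obtain ⟨hm2, hnd, hch⟩ := hc
      have hv : v ∈ s := hm2 v (by simp)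
      set g : Fin n → Fin m := fun x => if h : x ∈ s then s.equivFin ⟨x, h⟩
        else s.equivFin ⟨v, hv⟩ with hg
      have hge : ∀ x, x ∈ s → e (g x) = x := by
        intro x hx
        simp only [hg, dif_pos hx, he]
        rw [Equiv.symm_apply_apply]
      refine hφ' (g v) (l.map g) ⟨fun x _ => trivial, ?_, ?_⟩ ?_
      · have : (g v :: l.map g) = (v :: l).map g := by simp
        rw [this]
        refine List.Nodup.map_on ?_ hnd
        intro x hx y hy hxy
        have hx' : x ∈ s := hm2 x hx
        have hy' : y ∈ s := hm2 y hy
        rw [← hge x hx', ← hge y hy', hxy]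
      · have := chain_map (A' := A') g (↑s) ?_ (l ++ [v]) v ?_ hch
        · rwa [List.map_append, List.map_singleton] at this
        · intro x y hx hy hxy
          show A (e (g x)) (e (g y))
          rwa [hge x hx, hge y hy]
        · intro x hx
          rcases List.mem_cons.mp hx with h | h
          · exact h ▸ hv
          · rcases List.mem_append.mp h with h | h
            · exact hm2 x (by simp [h])
            · simp at h; exact h ▸ hv
      · intro x hx
        rcases List.mem_cons.mp hx with h | h
        · rw [h]
        · obtain ⟨y, hy, rfl⟩ := List.mem_map.mp h
          have hy' : y ∈ s := hm2 y (by simp [hy])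
          have h1 := hmono y (by simp [hy])
          have h2 := hmono v (by simp)
          simp only [dif_pos hy', dif_pos hv] at h1 h2
          show φ' (g y) = φ' (g v)
          simp only [hg, dif_pos hy', dif_pos hv]
          exact h1
  have hc_le : c ≤ dichromaticNumber A' := by
    have hnonempty : {k | DicolorableOn A' Set.univ k}.Nonempty := ⟨m, dicol_self hA'loop⟩
    exact hT _ (Nat.sInf_mem hnonempty)
  obtain ⟨f', p', hinj, hchain, hnodup, hint, hdisj⟩ := hB m A' hA'loop hc_le
  refine ⟨e ∘ f', fun u v => (p' u v).map e, he_inj.comp hinj, ?_, ?_, ?_, ?_, ?_, ?_⟩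
  · intro u v huv
    have := chain_map e Set.univ (fun x y _ _ h => h) (p' u v ++ [f' v]) (f' u)
      (fun x _ => trivial) (hchain u v huv)
    rwa [List.map_append, List.map_singleton] at this
  · intro u v huv
    have : ((e ∘ f') u :: ((p' u v).map e ++ [(e ∘ f') v])) =
        (f' u :: (p' u v ++ [f' v])).map e := by simp
    rw [this]
    exact (hnodup u v huv).map he_inj
  · intro u v huv x hx w
    obtain ⟨y, hy, rfl⟩ := List.mem_map.mp hx
    exact fun h => hint u v huv y hy w (he_inj h)
  · intro u v u' v' h1 h2 hne' x hx hx'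
    obtain ⟨y, hy, rfl⟩ := List.mem_map.mp hx
    obtain ⟨z, hz, hez⟩ := List.mem_map.mp hx'
    exact hdisj u v u' v' h1 h2 hne' y hy (he_inj hez.symm ▸ hz)
  · intro w
    exact he_mem (f' w)
  · intro u v _ x hx
    obtain ⟨y, _, rfl⟩ := List.mem_map.mp hx
    exact he_mem y

lemma combine_sub {W₁ W₂ V : Type} {B₁ : W₁ → W₁ → Prop} {B₂ : W₂ → W₂ → Prop}
    {A : V → V → Prop} {s t : Set V} (hst : ∀ x, x ∈ s → x ∉ t)
    (h₁ : ContainsSubdivisionOn B₁ A s) (h₂ : ContainsSubdivisionOn B₂ A t) :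
    ContainsSubdivision (sumRel B₁ B₂) A := by
  obtain ⟨f₁, p₁, hinj₁, hch₁, hnd₁, hib₁, hdj₁, hfs₁, hps₁⟩ := h₁
  obtain ⟨f₂, p₂, hinj₂, hch₂, hnd₂, hib₂, hdj₂, hfs₂, hps₂⟩ := h₂
  refine ⟨Sum.elim f₁ f₂, fun u v => match u, v with
    | Sum.inl a, Sum.inl b => p₁ a b
    | Sum.inr a, Sum.inr b => p₂ a b
    | _, _ => [], ?_, ?_, ?_, ?_, ?_⟩
  · rintro (a | a) (b | b) h
    · exact congrArg Sum.inl (hinj₁ h)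
    · exfalso
      apply hst (f₁ a) (hfs₁ a)
      have h' : f₁ a = f₂ b := h
      exact h' ▸ hfs₂ b
    · exfalso
      apply hst (f₁ b) (hfs₁ b)
      have h' : f₂ a = f₁ b := h
      exact h' ▸ hfs₂ a
    · exact congrArg Sum.inr (hinj₂ h)
  · rintro (a | a) (b | b) h
    · exact hch₁ a b h
    · exact h.elim
    · exact h.elim
    · exact hch₂ a b h
  · rintro (a | a) (b | b) h
    · exact hnd₁ a b h
    · exact h.elim
    · exact h.elim
    · exact hnd₂ a b h
  · rintro (a | a) (b | b) h x hx (w | w)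
    · exact hib₁ a b h x hx w
    · exact fun hc => hst x (hps₁ a b h x hx) (hc ▸ hfs₂ w)
    · exact h.elim
    · exact h.elim
    · exact h.elim
    · exact h.elim
    · exact fun hc => hst x (hc ▸ hfs₁ w) (hps₂ a b h x hx)
    · exact hib₂ a b h x hx w
  · rintro (a | a) (b | b) (a' | a') (b' | b') h h' hne x hx hx' <;>
      first
      | exact h.elim
      | exact h'.elim
      | exact List.not_mem_nil x hx
      | exact List.not_mem_nil x hx'
      | skip
    · refine hdj₁ a b a' b' h h' ?_ x hx hx'
      intro hEq
      apply hne
      rw [Prod.ext_iff] at hEq ⊢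
      exact ⟨congrArg Sum.inl hEq.1, congrArg Sum.inl hEq.2⟩
    · exact hst x (hps₁ a b h x hx) (hps₂ a' b' h' x hx')
    · exact hst x (hps₁ a' b' h' x hx') (hps₂ a b h x hx)
    · refine hdj₂ a b a' b' h h' ?_ x hx hx'
      intro hEq
      apply hne
      rw [Prod.ext_iff] at hEq ⊢
      exact ⟨congrArg Sum.inr hEq.1, congrArg Sum.inr hEq.2⟩


/-- `mader_χ⃗(F₁ + F₂) ≤ mader_χ⃗(F₁) + mader_χ⃗(F₂)` for the disjoint union `F₁ + F₂`,
assuming `mader_χ⃗(F₁)` and `mader_χ⃗(F₂)` are finite (i.e. some Mader bound exists). -/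
theorem stmt6 {W₁ W₂ : Type} (B₁ : W₁ → W₁ → Prop) (B₂ : W₂ → W₂ → Prop)
    (h₁ : ∃ c, IsMaderBound B₁ c) (h₂ : ∃ c, IsMaderBound B₂ c) :
    maderChi (sumRel B₁ B₂) ≤ maderChi B₁ + maderChi B₂ := by
  have hc₁ : IsMaderBound B₁ (maderChi B₁) := Nat.sInf_mem h₁
  have hc₂ : IsMaderBound B₂ (maderChi B₂) := Nat.sInf_mem h₂
  set c₁ := maderChi B₁ with hc1d
  set c₂ := maderChi B₂ with hc2d
  have hmain : IsMaderBound (sumRel B₁ B₂) (c₁ + c₂) := by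
    intro n A hA hχ
    classical
    have noColU : ∀ k, k < c₁ + c₂ → ¬ DicolorableOn A Set.univ k := by
      intro k hk hd
      have : dichromaticNumber A ≤ k := Nat.sInf_le hd
      omega
    have hX : ∃ X : Finset (Fin n), (∀ k, k < c₁ → ¬ DicolorableOn A (↑X) k) ∧
        (c₁ ≠ 0 → X.Nonempty) ∧ (∀ k, k < c₂ → ¬ DicolorableOn A (↑(Xᶜ)) k) ∧
        (c₂ ≠ 0 → (Xᶜ : Finset (Fin n)).Nonempty) := by
      by_cases hc10 : c₁ = 0
      · refine ⟨∅, fun k hk => by omega, fun h => absurd hc10 h, ?_, ?_⟩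
        · intro k hk hd
          refine noColU k (by omega) ?_
          have hcoe : (↑((∅ : Finset (Fin n))ᶜ) : Set (Fin n)) = Set.univ := by simp
          rwa [hcoe] at hd
        · intro hc2
          have hn : n ≠ 0 := by
            rintro rfl
            exact noColU 0 (by omega) ⟨Fin.elim0, fun v => v.elim0⟩
          have : Nonempty (Fin n) := ⟨⟨0, Nat.pos_of_ne_zero hn⟩⟩
          rw [Finset.compl_empty]
          exact Finset.univ_nonempty
      · have hn : n ≠ 0 := by
          rintro rfl
          exact noColU 0 (by omega) ⟨Fin.elim0, fun v => v.elim0⟩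
        have hnty : Nonempty (Fin n) := ⟨⟨0, Nat.pos_of_ne_zero hn⟩⟩
        set S : Set ℕ := {m | ∃ s : Finset (Fin n), s.card = m ∧ s.Nonempty ∧
          ∀ k, k < c₁ → ¬ DicolorableOn A (↑s) k} with hS
        have hSne : S.Nonempty := by
          refine ⟨n, Finset.univ, by simp, Finset.univ_nonempty, ?_⟩
          intro k hk hd
          rw [Finset.coe_univ] at hd
          exact noColU k (by omega) hd
        obtain ⟨X, hXcard, hXne, hXcol⟩ := Nat.sInf_mem hSne
        have hmin : ∀ s : Finset (Fin n), s.Nonempty →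
            (∀ k, k < c₁ → ¬ DicolorableOn A (↑s) k) → X.card ≤ s.card := by
          intro s hs1 hs2
          rw [hXcard]
          exact Nat.sInf_le ⟨s, rfl, hs1, hs2⟩
        have dX : DicolorableOn A (↑X) c₁ := by
          rcases Nat.lt_or_ge X.card 2 with h2 | h2
          · refine dicol_mono (dicol_subsingleton hA ?_) (by omega : 1 ≤ c₁)
            intro x hx y hy
            exact Finset.card_le_one.mp (by omega) x hx y hy
          · obtain ⟨v, hv⟩ := hXne
            have hcarde := Finset.card_erase_of_mem hv
            have herase : ¬ (∀ k, k < c₁ → ¬ DicolorableOn A (↑(X.erase v)) k) := by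
              intro hcon
              have := hmin (X.erase v) (Finset.card_pos.mp (by omega)) hcon
              omega
            push_neg at herase
            obtain ⟨k, hk, hdk⟩ := herase
            have hdk' : DicolorableOn A ((↑X : Set (Fin n)) \ {v}) k := by
              rwa [Finset.coe_erase] at hdk
            exact dicol_mono (dicol_erase hA hdk') (by omega)
        refine ⟨X, hXcol, fun _ => hXne, ?_, ?_⟩
        · intro k hk hd
          have hu : DicolorableOn A ((↑(Xᶜ) : Set (Fin n)) ∪ ↑X) (k + c₁) :=
            dicol_union hd dX
          refine noColU (k + c₁) (by omega) (dicol_subset hu ?_)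
          intro x _
          rw [Finset.coe_compl]
          by_cases hx : x ∈ (↑X : Set (Fin n))
          · exact Or.inr hx
          · exact Or.inl hx
        · intro hc2
          by_contra hne2
          rw [Finset.not_nonempty_iff_eq_empty] at hne2
          have hXu : X = Finset.univ := by
            rwa [Finset.compl_eq_empty_iff] at hne2
          refine noColU c₁ (by omega) ?_
          rw [hXu, Finset.coe_univ] at dX
          exact dX
    obtain ⟨X, hX1, hX2, hX3, hX4⟩ := hX
    have hs₁ := restrict_sub B₁ c₁ hc₁ A hA X hX1 hX2
    have hs₂ := restrict_sub B₂ c₂ hc₂ A hA Xᶜ hX3 hX4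
    refine combine_sub ?_ hs₁ hs₂
    intro x hx
    rw [Finset.coe_compl]
    simp only [Set.mem_compl_iff]
    exact fun h => h hx
  exact Nat.sInf_le hmain
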